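/- Let θ ∈ (0,1), N ≥ 1, and let a₁, a₂ ≥ 0, b ≥ 0, h > 0 satisfy a₂ ≤ ε a₁ + ε^{−(1−θ)/θ} N e^{N/h} b for all ε > 0. Then for every q ≥ (N+1−θ)/(N+1), e^{−(N+1−θ)/h} a₂ − e^{−(N+1−θ)/(q h)} a₁ ≤ N b. -/

import Mathlib

/-- the telescoping-ready inequality: if
`a₂ ≤ ε a₁ + ε^{−(1−θ)/θ} N e^{N/h} b` for all `ε > 0`, then for every
`q ≥ (N+1−θ)/(N+1)` one has `e^{−(N+1−θ)/h} a₂ − e^{−(N+1−θ)/(qh)} a₁ ≤ N b`. -/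
theorem stmt_7 (a₁ a₂ b N θ h : ℝ)
    (ha₁ : 0 ≤ a₁) (ha₂ : 0 ≤ a₂) (hb : 0 ≤ b) (hN : 1 ≤ N)
    (hθ : θ ∈ Set.Ioo (0 : ℝ) 1) (hh : 0 < h)
    (hmain : ∀ ε : ℝ, 0 < ε →
      a₂ ≤ ε * a₁ + ε ^ (-(1 - θ) / θ) * N * Real.exp (N / h) * b) :
    ∀ q : ℝ, (N + 1 - θ) / (N + 1) ≤ q →
      Real.exp (-(N + 1 - θ) / h) * a₂ - Real.exp (-(N + 1 - θ) / (q * h)) * a₁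
        ≤ N * b := by
  obtain ⟨hθ0, hθ1⟩ := hθ
  intro q hq
  have hN1 : (0:ℝ) < N + 1 := by linarith
  have hq0 : 0 < q := lt_of_lt_of_le (div_pos (by linarith) hN1) hq
  have key := hmain (Real.exp (-θ / h)) (Real.exp_pos _)
  have hrw : Real.exp (-θ / h) ^ (-(1 - θ) / θ) = Real.exp ((1 - θ) / h) := by
    rw [← Real.exp_log (Real.exp_pos (-θ / h)), Real.log_exp, ← Real.exp_mul]
    congr 1
    field_simp
  rw [hrw] at key
  have hmul : Real.exp (-(N + 1 - θ) / h) * a₂ ≤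
      Real.exp (-(N + 1 - θ) / h) * (Real.exp (-θ / h) * a₁ +
        Real.exp ((1 - θ) / h) * N * Real.exp (N / h) * b) :=
    mul_le_mul_of_nonneg_left key (Real.exp_pos _).le
  have e1 : Real.exp (-(N + 1 - θ) / h) * Real.exp (-θ / h) =
      Real.exp (-(N + 1) / h) := by
    rw [← Real.exp_add]; congr 1; field_simp; ring
  have e2 : Real.exp (-(N + 1 - θ) / h) * (Real.exp ((1 - θ) / h) *
      Real.exp (N / h)) = 1 := by
    rw [← Real.exp_add, ← Real.exp_add, ← Real.exp_zero]; congr 1; field_simp; ring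
  have hmul' : Real.exp (-(N + 1 - θ) / h) * a₂ ≤
      Real.exp (-(N + 1) / h) * a₁ + N * b := by
    calc Real.exp (-(N + 1 - θ) / h) * a₂ ≤ _ := hmul
      _ = Real.exp (-(N + 1 - θ) / h) * Real.exp (-θ / h) * a₁ +
          (Real.exp (-(N + 1 - θ) / h) * (Real.exp ((1 - θ) / h) *
            Real.exp (N / h))) * (N * b) := by ring
      _ = Real.exp (-(N + 1) / h) * a₁ + N * b := by rw [e1, e2]; ring
  have hexp : Real.exp (-(N + 1) / h) ≤ Real.exp (-(N + 1 - θ) / (q * h)) := by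
    apply Real.exp_le_exp.mpr
    rw [div_le_div_iff₀ hh (by positivity), neg_mul, neg_mul, neg_le_neg_iff]
    nlinarith [(div_le_iff₀ hN1).mp hq]
  nlinarith [mul_le_mul_of_nonneg_right hexp ha₁]
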